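/- The function x ↦ ln(1 + 1/(x²−1)) − 1/(x²+x) tends to 0 as x → ∞ and is strictly decreasing on (1,∞); hence it is strictly positive on (1,∞). -/

import Mathlib

open Real Set Filter

theorem stmt_17 :
    Filter.Tendsto (fun x : ℝ => Real.log (1 + 1 / (x ^ 2 - 1)) - 1 / (x ^ 2 + x))
      Filter.atTop (nhds 0) ∧
    StrictAntiOn (fun x : ℝ => Real.log (1 + 1 / (x ^ 2 - 1)) - 1 / (x ^ 2 + x))
      (Set.Ioi 1) ∧
    (∀ x : ℝ, 1 < x → 0 < Real.log (1 + 1 / (x ^ 2 - 1)) - 1 / (x ^ 2 + x)) := by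
  set f : ℝ → ℝ := fun x => Real.log (1 + 1 / (x ^ 2 - 1)) - 1 / (x ^ 2 + x) with hfdef
  -- limit
  have hx2 : Tendsto (fun x : ℝ => x ^ 2 - 1) atTop atTop := by
    have := tendsto_pow_atTop (two_ne_zero) (α := ℝ)
    simpa [sub_eq_add_neg] using tendsto_atTop_add_const_right atTop (-1) this
  have hx2x : Tendsto (fun x : ℝ => x ^ 2 + x) atTop atTop :=
    Tendsto.atTop_add_atTop (tendsto_pow_atTop two_ne_zero) tendsto_id
  have h1 : Tendsto (fun x : ℝ => 1 / (x ^ 2 - 1)) atTop (nhds 0) := by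
    simpa [one_div, Pi.inv_def] using hx2.inv_tendsto_atTop
  have h2 : Tendsto (fun x : ℝ => 1 / (x ^ 2 + x)) atTop (nhds 0) := by
    simpa [one_div, Pi.inv_def] using hx2x.inv_tendsto_atTop
  have hlog : Tendsto (fun x : ℝ => Real.log (1 + 1 / (x ^ 2 - 1))) atTop (nhds 0) := by
    have hin : Tendsto (fun x : ℝ => 1 + 1 / (x ^ 2 - 1)) atTop (nhds 1) := by
      simpa using tendsto_const_nhds.add h1
    have := (Real.continuousAt_log one_ne_zero).tendsto.comp hin
    simpa [Function.comp_def] using this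
  have hlim : Tendsto f atTop (nhds 0) := by
    simpa [hfdef, sub_zero, one_div] using hlog.sub h2
  -- derivative
  have hderiv : ∀ x : ℝ, 1 < x →
      HasDerivAt f (-(2 * x) / (x ^ 2 - 1) ^ 2 / (1 + 1 / (x ^ 2 - 1)) - -(2 * x + 1) / (x ^ 2 + x) ^ 2) x := by
    intro x hx
    have h1 : x ^ 2 - 1 ≠ 0 := by nlinarith
    have h2 : x ^ 2 + x ≠ 0 := by nlinarith
    have hu : (1 : ℝ) + 1 / (x ^ 2 - 1) ≠ 0 := by
      have hlt : (0:ℝ) < x ^ 2 - 1 := by nlinarith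
      have hpos : (0:ℝ) < 1 / (x ^ 2 - 1) := by positivity
      nlinarith
    have d1 : HasDerivAt (fun x : ℝ => x ^ 2 - 1) (2 * x) x := by
      simpa using (hasDerivAt_pow 2 x).sub_const 1
    have d2 : HasDerivAt (fun x : ℝ => 1 + 1 / (x ^ 2 - 1)) (-(2 * x) / (x ^ 2 - 1) ^ 2) x := by
      simpa [one_div] using (d1.inv h1).const_add 1
    have d3 : HasDerivAt (fun x : ℝ => Real.log (1 + 1 / (x ^ 2 - 1)))
        (-(2 * x) / (x ^ 2 - 1) ^ 2 / (1 + 1 / (x ^ 2 - 1))) x := d2.log hu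
    have d4 : HasDerivAt (fun x : ℝ => x ^ 2 + x) (2 * x + 1) x := by
      simpa [Pi.add_def] using (hasDerivAt_pow 2 x).add (hasDerivAt_id x)
    have d5 : HasDerivAt (fun x : ℝ => 1 / (x ^ 2 + x)) (-(2 * x + 1) / (x ^ 2 + x) ^ 2) x := by
      simpa [one_div, Pi.inv_def] using d4.inv h2
    exact d3.sub d5
  have hneg : ∀ x : ℝ, 1 < x →
      (-(2 * x) / (x ^ 2 - 1) ^ 2 / (1 + 1 / (x ^ 2 - 1)) - -(2 * x + 1) / (x ^ 2 + x) ^ 2) < 0 := by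
    intro x hx
    have h1 : (0:ℝ) < x ^ 2 - 1 := by nlinarith
    have h2 : (0:ℝ) < x ^ 2 + x := by nlinarith
    have hx0 : (0:ℝ) < x := by linarith
    have heq : (-(2 * x) / (x ^ 2 - 1) ^ 2 / (1 + 1 / (x ^ 2 - 1)) - -(2 * x + 1) / (x ^ 2 + x) ^ 2)
        = (2 * x + 1) / (x ^ 2 + x) ^ 2 - 2 / (x * (x ^ 2 - 1)) := by
      rw [div_div]
      have : (x ^ 2 - 1) ^ 2 * (1 + 1 / (x ^ 2 - 1)) = (x ^ 2 - 1) * x ^ 2 := by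
        field_simp; ring
      rw [this]
      field_simp
      ring
    rw [heq, sub_neg]
    rw [div_lt_div_iff₀ (by positivity) (by positivity)]
    nlinarith [sq_nonneg x, mul_pos hx0 h1]
  have hanti : StrictAntiOn f (Set.Ioi 1) := by
    apply strictAntiOn_of_deriv_neg (convex_Ioi 1)
    · intro x hx
      exact ((hderiv x hx).differentiableAt).continuousAt.continuousWithinAt
    · intro x hx
      rw [interior_Ioi] at hx
      rw [(hderiv x hx).deriv]
      exact hneg x hx
  refine ⟨hlim, hanti, ?_⟩
  intro x hx
  have hge : ∀ y : ℝ, 1 < y → 0 ≤ f y := by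
    intro y hy
    refine le_of_tendsto hlim ?_
    filter_upwards [eventually_gt_atTop y] with z hz
    exact le_of_lt (hanti (by exact hy) (lt_trans hy hz) hz)
  have := hanti (Set.mem_Ioi.mpr hx) (Set.mem_Ioi.mpr (by linarith : (1:ℝ) < x + 1)) (by linarith)
  have h0 := hge (x + 1) (by linarith)
  calc (0:ℝ) ≤ f (x + 1) := h0
    _ < f x := this
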